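/- arXiv:1312.7257 — 3 statements merged into one kernel-verified Lean document; each statement's English description precedes it below -/
import Mathlib

section
/- Let I be an open interval, 𝔰 : I → (0, ∞) continuous, c ∈ I, and (ℓ̃(c), r̃(c)) the image of I under H_c(x) = ∫_c^x dz/𝔰(z). If ϑ : (ℓ̃(c), r̃(c)) → I is any continuous function satisfying ϑ(w) = c + ∫_0^w 𝔰(ϑ(ζ)) dζ for all w in its domain, then ϑ = Θ_c, i.e., the integral equation ϑ(w) = c + ∫_0^w 𝔰(ϑ(ζ)) dζ has at most one solution, namely the inverse Θ_c of H_c. -/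
open Set MeasureTheory

/-- Uniqueness for the ordinary integral equation `ϑ(w) = c + ∫_0^w 𝔰(ϑ(ζ)) dζ`:
any continuous solution with values in `(ℓ, r)`, defined on the domain
`H_c '' (ℓ, r)`, coincides with the inverse `Θ_c` of `H_c(x) = ∫_c^x dz/𝔰(z)`. -/
theorem stmt6 (ℓ r : ℝ) (hlr : ℓ < r) (s : ℝ → ℝ)
    (hscont : ContinuousOn s (Ioo ℓ r))
    (hpos : ∀ x ∈ Ioo ℓ r, 0 < s x)
    (c : ℝ) (hc : c ∈ Ioo ℓ r)
    (H : ℝ → ℝ) (hH : ∀ x : ℝ, H x = ∫ z in c..x, (s z)⁻¹)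
    (Θ : ℝ → ℝ)
    (hΘmem : ∀ w ∈ H '' Ioo ℓ r, Θ w ∈ Ioo ℓ r)
    (hΘleft : ∀ x ∈ Ioo ℓ r, Θ (H x) = x)
    (hΘright : ∀ w ∈ H '' Ioo ℓ r, H (Θ w) = w)
    (ϑ : ℝ → ℝ)
    (hϑcont : ContinuousOn ϑ (H '' Ioo ℓ r))
    (hϑmem : ∀ w ∈ H '' Ioo ℓ r, ϑ w ∈ Ioo ℓ r)
    (hϑeq : ∀ w ∈ H '' Ioo ℓ r, ϑ w = c + ∫ ζ in (0:ℝ)..w, s (ϑ ζ)) :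
    ∀ w ∈ H '' Ioo ℓ r, ϑ w = Θ w := by
  have hHfun : H = fun x => ∫ z in c..x, (s z)⁻¹ := funext hH
  set S : Set ℝ := H '' Ioo ℓ r with hSdef
  have hIooOpen : IsOpen (Ioo ℓ r) := isOpen_Ioo
  have hne : ∀ x ∈ Ioo ℓ r, s x ≠ 0 := fun x hx => (hpos x hx).ne'
  have hsInvCont : ContinuousOn (fun z => (s z)⁻¹) (Ioo ℓ r) := hscont.inv₀ hne
  -- derivative of H
  have hHderiv : ∀ x ∈ Ioo ℓ r, HasDerivAt H (s x)⁻¹ x := by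
    intro x hx
    rw [hHfun]
    have hsub : uIcc c x ⊆ Ioo ℓ r := (ordConnected_Ioo).uIcc_subset hc hx
    exact intervalIntegral.integral_hasDerivAt_right
      ((hsInvCont.mono hsub).intervalIntegrable)
      (hsInvCont.stronglyMeasurableAtFilter hIooOpen x hx)
      (hsInvCont.continuousAt (hIooOpen.mem_nhds hx))
  have hHcont : ContinuousOn H (Ioo ℓ r) := fun x hx =>
    (hHderiv x hx).continuousAt.continuousWithinAt
  have hHc0 : H c = 0 := by rw [hH c, intervalIntegral.integral_same]
  have h0S : (0 : ℝ) ∈ S := ⟨c, hc, hHc0⟩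
  -- S contains uIcc 0 w for w ∈ S
  have huIcc : ∀ w ∈ S, uIcc (0 : ℝ) w ⊆ S := by
    rintro w ⟨x, hx, rfl⟩
    have hxsub : uIcc c x ⊆ Ioo ℓ r := (ordConnected_Ioo).uIcc_subset hc hx
    have := intermediate_value_uIcc (hHcont.mono hxsub)
    rw [hHc0] at this
    exact this.trans (image_mono hxsub)
  -- S is open
  have hHmono : StrictMonoOn H (Ioo ℓ r) := by
    refine strictMonoOn_of_deriv_pos (convex_Ioo ℓ r) hHcont ?_
    intro x hx
    rw [interior_Ioo] at hx
    rw [(hHderiv x hx).deriv]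
    exact inv_pos.2 (hpos x hx)
  have hSopen : IsOpen S := by
    rw [isOpen_iff_mem_nhds]
    rintro w ⟨x, hx, rfl⟩
    obtain ⟨x₁, hx₁, hx₁x⟩ := exists_between hx.1
    obtain ⟨x₂, hxx₂, hx₂⟩ := exists_between hx.2
    have hx₁m : x₁ ∈ Ioo ℓ r := ⟨hx₁, hx₁x.trans hx.2⟩
    have hx₂m : x₂ ∈ Ioo ℓ r := ⟨hx.1.trans hxx₂, hx₂⟩
    have hsub : Icc x₁ x₂ ⊆ Ioo ℓ r := fun y hy => ⟨hx₁.trans_le hy.1, hy.2.trans_lt hx₂⟩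
    have hIVT : Icc (H x₁) (H x₂) ⊆ H '' Icc x₁ x₂ :=
      intermediate_value_Icc (hx₁x.trans hxx₂).le (hHcont.mono hsub)
    have hmem : H x ∈ Ioo (H x₁) (H x₂) :=
      ⟨hHmono hx₁m hx hx₁x, hHmono hx hx₂m hxx₂⟩
    refine Filter.mem_of_superset (isOpen_Ioo.mem_nhds hmem) ?_
    exact fun y hy => (hIVT (Ioo_subset_Icc_self hy)).imp fun z hz => ⟨hsub hz.1, hz.2⟩
  -- continuity of s ∘ ϑ on S
  have hcomp : ContinuousOn (fun ζ => s (ϑ ζ)) S := hscont.comp hϑcont hϑmem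
  -- derivative of ϑ on S
  have hϑderiv : ∀ w ∈ S, HasDerivAt ϑ (s (ϑ w)) w := by
    intro w hw
    have hG : HasDerivAt (fun w => c + ∫ ζ in (0:ℝ)..w, s (ϑ ζ)) (s (ϑ w)) w := by
      refine (intervalIntegral.integral_hasDerivAt_right
        ((hcomp.mono (huIcc w hw)).intervalIntegrable)
        (hcomp.stronglyMeasurableAtFilter hSopen w hw)
        (hcomp.continuousAt (hSopen.mem_nhds hw))).const_add c
    refine hG.congr_of_eventuallyEq ?_
    filter_upwards [hSopen.mem_nhds hw] with u hu using hϑeq u hu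
  -- F w = H (ϑ w) - w has zero derivative on S
  have hF : ∀ w ∈ S, HasDerivAt (fun w => H (ϑ w) - w) 0 w := by
    intro w hw
    have h1 : HasDerivAt (fun w => H (ϑ w)) ((s (ϑ w))⁻¹ * s (ϑ w)) w :=
      (hHderiv (ϑ w) (hϑmem w hw)).comp w (hϑderiv w hw)
    have := h1.sub (hasDerivAt_id w)
    rwa [inv_mul_cancel₀ (hne _ (hϑmem w hw)), sub_self] at this
  -- ϑ 0 = c
  have hϑ0 : ϑ 0 = c := by
    rw [hϑeq 0 h0S, intervalIntegral.integral_same, add_zero]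
  have hF0 : H (ϑ 0) - 0 = 0 := by rw [hϑ0, hHc0, sub_zero]
  -- H (ϑ w) = w on S by constancy
  intro w hw
  have key : H (ϑ w) = w := by
    set a := min 0 w
    set b := max 0 w
    have hab : Icc a b = uIcc 0 w := rfl
    have hsub : Icc a b ⊆ S := hab ▸ huIcc w hw
    have hconst : ∀ x ∈ Icc a b, (fun w => H (ϑ w) - w) x = (fun w => H (ϑ w) - w) a := by
      refine constant_of_has_deriv_right_zero ?_ ?_
      · exact fun x hx => ((hF x (hsub hx)).continuousAt).continuousWithinAt
      · exact fun x hx => ((hF x (hsub (Ico_subset_Icc_self hx))).hasDerivWithinAt)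
    have h0m : (0 : ℝ) ∈ Icc a b := hab ▸ left_mem_uIcc
    have hwm : w ∈ Icc a b := hab ▸ right_mem_uIcc
    have := (hconst w hwm).trans (hconst 0 h0m).symm
    simp only [hF0] at this
    linarith [this]
  have := hΘleft (ϑ w) (hϑmem w hw)
  rw [key] at this
  exact this.symm
end

section
/- Let A : ℝ → (0, ∞) be continuous with ∫_{-∞}^0 dz/A(z) = ∞ and ∫_0^∞ dz/A(z) = ∞, and let B : [0, ∞) → ℝ be continuous, of finite variation on compact intervals, with B(0) = 0. Define 𝚯₀ : ℝ → ℝ as the inverse of 𝐇₀(x) = ∫_0^x dz/A(z). Then Γ(t) := 𝚯₀(B(t)) is a solution of the Stieltjes integral equation Γ(t) = ∫_0^t A(Γ(s)) dB(s) for all t ≥ 0, and it is the unique continuous finite-variation solution of this equation. -/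
open Set MeasureTheory Filter
open scoped NNReal ENNReal

-- interval integral of 1 equals measure toReal
lemma int_one (μ : Measure ℝ) [IsLocallyFiniteMeasure μ] {a b : ℝ} (hab : a ≤ b) :
    ∫ _ in a..b, (1:ℝ) ∂μ = (μ (Ioc a b)).toReal := by
  rw [intervalIntegral.integral_of_le hab, setIntegral_const, smul_eq_mul, mul_one, measureReal_def]

set_option maxHeartbeats 1000000 in
lemma chain_rule (f f' : ℝ → ℝ) (hf : ∀ x, HasDerivAt f (f' x) x) (hf' : Continuous f')
    (C : ℝ → ℝ) (hC : Continuous C) (νp νn : Measure ℝ)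
    [IsLocallyFiniteMeasure νp] [IsLocallyFiniteMeasure νn]
    (hν : ∀ a b : ℝ, 0 ≤ a → a ≤ b →
      (νp (Ioc a b)).toReal - (νn (Ioc a b)).toReal = C b - C a)
    (t : ℝ) (ht : 0 ≤ t) :
    f (C t) - f (C 0) =
      (∫ u in Ioc (0:ℝ) t, f' (C u) ∂νp) - ∫ u in Ioc (0:ℝ) t, f' (C u) ∂νn := by
  rcases ht.eq_or_lt with h0 | h0
  · rw [← h0]; simp
  set g : ℝ → ℝ := fun u => f' (C u) with hg_def
  have hg : Continuous g := hf'.comp hC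
  set K : ℝ := (νp (Ioc 0 t)).toReal + (νn (Ioc 0 t)).toReal with hK_def
  set E : ℝ := f (C t) - f (C 0) -
      ((∫ u in Ioc (0:ℝ) t, g u ∂νp) - ∫ u in Ioc (0:ℝ) t, g u ∂νn) with hE_def
  have key : ∀ ε : ℝ, 0 < ε → |E| ≤ ε * (2 * K) := by
    intro ε hε
    -- bound on C over [0,t]
    obtain ⟨R, hR⟩ := (isCompact_Icc (a := (0:ℝ)) (b := t)).exists_bound_of_continuousOn
      hC.continuousOn
    have hCR : ∀ u ∈ Icc (0:ℝ) t, C u ∈ Icc (-R) R := by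
      intro u hu
      have := hR u hu
      rw [Real.norm_eq_abs, abs_le] at this
      exact ⟨this.1, this.2⟩
    -- uniform continuity of f' on [-R,R]
    have huf' := (isCompact_Icc (a := -R) (b := R)).uniformContinuousOn_of_continuous
      hf'.continuousOn
    rw [Metric.uniformContinuousOn_iff] at huf'
    obtain ⟨δ₁, hδ₁, hδ₁'⟩ := huf' ε hε
    -- uniform continuity of C on [0,t]
    have huC := (isCompact_Icc (a := (0:ℝ)) (b := t)).uniformContinuousOn_of_continuous
      hC.continuousOn
    rw [Metric.uniformContinuousOn_iff] at huC
    obtain ⟨δ₂, hδ₂, hδ₂'⟩ := huC δ₁ hδ₁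
    -- choose n
    obtain ⟨n, hn⟩ := exists_nat_gt (t / δ₂)
    have hn0 : 0 < (n:ℝ) := lt_trans (div_pos h0 hδ₂) hn
    have hmesh : t / n < δ₂ := by
      rw [div_lt_iff₀ hn0]
      rw [div_lt_iff₀ hδ₂] at hn
      linarith [hn]
    set a : ℕ → ℝ := fun i => i * (t / n) with ha_def
    have ha0 : a 0 = 0 := by simp [ha_def]
    have han : a n = t := by simp only [ha_def]; field_simp
    have hstep : ∀ i : ℕ, a (i+1) - a i = t / n := by
      intro i; simp only [ha_def]; push_cast; ring
    have hanonneg : ∀ i : ℕ, 0 ≤ a i := by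
      intro i
      exact mul_nonneg (Nat.cast_nonneg i) (le_of_lt (div_pos h0 hn0))
    have hamono : ∀ i : ℕ, a i ≤ a (i+1) := by
      intro i
      have := hstep i
      have h2 : 0 < t / n := div_pos h0 hn0
      linarith
    have hale : ∀ i : ℕ, i ≤ n → a i ≤ t := by
      intro i hi
      have : (i:ℝ) ≤ (n:ℝ) := Nat.cast_le.mpr hi
      calc a i = i * (t/n) := rfl
        _ ≤ n * (t/n) := by
            apply mul_le_mul_of_nonneg_right this (le_of_lt (div_pos h0 hn0))
        _ = t := by field_simp
    have hmem : ∀ i : ℕ, i ≤ n → a i ∈ Icc (0:ℝ) t := fun i hi => ⟨hanonneg i, hale i hi⟩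
    -- interval integrability
    have hip : ∀ (μ : Measure ℝ) [IsLocallyFiniteMeasure μ], ∀ u v : ℝ,
        IntervalIntegrable g μ u v := fun μ _ u v => hg.intervalIntegrable u v
    -- decomposition of LHS
    have hsum1 : ∑ i ∈ Finset.range n, (f (C (a (i+1))) - f (C (a i))) = f (C t) - f (C 0) := by
      rw [Finset.sum_range_sub (fun i => f (C (a i)))]
      rw [ha0, han]
    -- decomposition of integrals
    have hsum2 : ∀ (μ : Measure ℝ) [IsLocallyFiniteMeasure μ],
        ∑ i ∈ Finset.range n, ∫ x in (a i)..(a (i+1)), g x ∂μ = ∫ u in Ioc (0:ℝ) t, g u ∂μ := by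
      intro μ _
      rw [intervalIntegral.sum_integral_adjacent_intervals (fun i _ => hip μ _ _)]
      rw [ha0, han, intervalIntegral.integral_of_le ht]
    -- decomposition of measures
    have hsum3 : ∀ (μ : Measure ℝ) [IsLocallyFiniteMeasure μ],
        ∑ i ∈ Finset.range n, (μ (Ioc (a i) (a (i+1)))).toReal = (μ (Ioc (0:ℝ) t)).toReal := by
      intro μ _
      have h1 : ∀ i ∈ Finset.range n, (μ (Ioc (a i) (a (i+1)))).toReal
          = ∫ _ in (a i)..(a (i+1)), (1:ℝ) ∂μ := by
        intro i _
        rw [int_one μ (hamono i)]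
      rw [Finset.sum_congr rfl h1,
        intervalIntegral.sum_integral_adjacent_intervals
          (fun i _ => intervalIntegrable_const), ha0, han, int_one μ ht]
    -- per-piece bound
    have piece : ∀ i ∈ Finset.range n,
        |(f (C (a (i+1))) - f (C (a i))) -
          ((∫ x in (a i)..(a (i+1)), g x ∂νp) - ∫ x in (a i)..(a (i+1)), g x ∂νn)|
        ≤ 2 * ε * ((νp (Ioc (a i) (a (i+1)))).toReal + (νn (Ioc (a i) (a (i+1)))).toReal) := by
      intro i hi
      rw [Finset.mem_range] at hi
      set b1 := a i with hb1
      set b2 := a (i+1) with hb2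
      have hab : b1 ≤ b2 := hamono i
      have hmem1 : b1 ∈ Icc (0:ℝ) t := hmem i (le_of_lt hi)
      have hmem2 : b2 ∈ Icc (0:ℝ) t := hmem (i+1) (Nat.succ_le_of_lt hi)
      set p := (νp (Ioc b1 b2)).toReal with hp
      set q := (νn (Ioc b1 b2)).toReal with hq
      have hp0 : 0 ≤ p := ENNReal.toReal_nonneg
      have hq0 : 0 ≤ q := ENNReal.toReal_nonneg
      have hCd : C b2 - C b1 = p - q := (hν b1 b2 hmem1.1 hab).symm
      have hclose : ∀ u ∈ Icc b1 b2, |C u - C b1| < δ₁ := by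
        intro u hu
        have hu' : u ∈ Icc (0:ℝ) t := ⟨le_trans hmem1.1 hu.1, le_trans hu.2 hmem2.2⟩
        have hd : dist u b1 < δ₂ := by
          rw [Real.dist_eq]
          have h1 : |u - b1| ≤ b2 - b1 := by
            rw [abs_le]; constructor <;> [linarith [hu.1, hab]; linarith [hu.2]]
          have h2 : b2 - b1 = t / n := hstep i
          linarith
        have := hδ₂' u hu' b1 hmem1 hd
        rwa [Real.dist_eq] at this
      set c := f' (C b1) with hc
      have hfc : ∀ y ∈ Icc (-R) R, |y - C b1| < δ₁ → |f' y - c| ≤ ε := by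
        intro y hy hyd
        have := hδ₁' y hy (C b1) (hCR b1 hmem1) (by rwa [Real.dist_eq])
        rw [Real.dist_eq] at this; exact le_of_lt this
      have hftc : f (C b2) - f (C b1) = ∫ y in (C b1)..(C b2), f' y :=
        (intervalIntegral.integral_eq_sub_of_hasDerivAt (fun x _ => hf x)
          (hf'.intervalIntegrable _ _)).symm
      have hsplit : (∫ y in (C b1)..(C b2), f' y)
          = (∫ y in (C b1)..(C b2), (f' y - c)) + c * (C b2 - C b1) := by
        rw [intervalIntegral.integral_sub (hf'.intervalIntegrable _ _) intervalIntegrable_const,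
          intervalIntegral.integral_const, smul_eq_mul]
        ring
      have hCb2close : |C b2 - C b1| < δ₁ := hclose b2 ⟨hab, le_rfl⟩
      have hbound1 : |∫ y in (C b1)..(C b2), (f' y - c)| ≤ ε * |C b2 - C b1| := by
        rw [← Real.norm_eq_abs]
        apply intervalIntegral.norm_integral_le_of_norm_le_const
        intro y hy
        have hyR : y ∈ Icc (-R) R :=
          uIcc_subset_Icc (hCR b1 hmem1) (hCR b2 hmem2) (uIoc_subset_uIcc hy)
        have hyd : |y - C b1| ≤ |C b2 - C b1| := by
          rw [Set.mem_uIoc] at hy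
          rcases hy with ⟨h1, h2⟩ | ⟨h1, h2⟩
          · rw [abs_of_pos (by linarith), abs_of_nonneg (by linarith)]; linarith
          · rw [abs_of_nonpos (by linarith), abs_of_nonpos (by linarith)]; linarith
        rw [Real.norm_eq_abs]
        exact hfc y hyR (lt_of_le_of_lt hyd hCb2close)
      have hgb : ∀ u ∈ Ioc b1 b2, ‖g u - c‖ ≤ ε := by
        intro u hu
        have hu' : u ∈ Icc b1 b2 := Ioc_subset_Icc_self hu
        have huIcc : u ∈ Icc (0:ℝ) t := ⟨le_trans hmem1.1 hu'.1, le_trans hu'.2 hmem2.2⟩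
        rw [Real.norm_eq_abs]
        exact hfc (C u) (hCR u huIcc) (hclose u hu')
      have hmint : ∀ (μ : Measure ℝ) [IsLocallyFiniteMeasure μ],
          (∫ u in Ioc b1 b2, g u ∂μ)
            = (∫ u in Ioc b1 b2, (g u - c) ∂μ) + c * (μ (Ioc b1 b2)).toReal := by
        intro μ _
        rw [integral_sub hg.integrableOn_Ioc
          (integrableOn_const measure_Ioc_lt_top.ne),
          setIntegral_const, smul_eq_mul, measureReal_def]
        ring
      have hbound2 : ∀ (μ : Measure ℝ) [IsLocallyFiniteMeasure μ],
          |∫ u in Ioc b1 b2, (g u - c) ∂μ| ≤ ε * (μ (Ioc b1 b2)).toReal := by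
        intro μ _
        rw [← Real.norm_eq_abs]
        exact norm_setIntegral_le_of_norm_le_const_ae' measure_Ioc_lt_top
          (ae_of_all _ hgb)
      have hio : ∀ (μ : Measure ℝ) [IsLocallyFiniteMeasure μ],
          (∫ x in b1..b2, g x ∂μ) = ∫ u in Ioc b1 b2, g u ∂μ := by
        intro μ _
        exact intervalIntegral.integral_of_le hab
      set X1 := ∫ y in (C b1)..(C b2), (f' y - c) with hX1
      set X2 := ∫ u in Ioc b1 b2, (g u - c) ∂νp with hX2
      set X3 := ∫ u in Ioc b1 b2, (g u - c) ∂νn with hX3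
      have hD : (f (C b2) - f (C b1)) -
          ((∫ x in b1..b2, g x ∂νp) - ∫ x in b1..b2, g x ∂νn) = X1 - X2 + X3 := by
        rw [hio νp, hio νn, hftc, hsplit, hmint νp, hmint νn, hCd, ← hp, ← hq]
        ring
      rw [hD]
      have habs1 : |X1 - X2 + X3| ≤ |X1| + |X2| + |X3| := by
        calc |X1 - X2 + X3| ≤ |X1 - X2| + |X3| := abs_add_le _ _
          _ ≤ |X1| + |X2| + |X3| := by linarith [abs_sub X1 X2]
      have hCabs : |C b2 - C b1| ≤ p + q := by
        rw [hCd]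
        calc |p - q| ≤ |p| + |q| := abs_sub p q
          _ = p + q := by rw [abs_of_nonneg hp0, abs_of_nonneg hq0]
      have h1 := hbound1
      have h2 := hbound2 νp
      have h3 := hbound2 νn
      have h4 : ε * |C b2 - C b1| ≤ ε * (p + q) :=
        mul_le_mul_of_nonneg_left hCabs (le_of_lt hε)
      rw [← hp] at h2
      rw [← hq] at h3
      nlinarith [h1, h2, h3, h4, habs1]
    -- assemble
    have hEsum : E = ∑ i ∈ Finset.range n,
        ((f (C (a (i+1))) - f (C (a i))) -
          ((∫ x in (a i)..(a (i+1)), g x ∂νp) - ∫ x in (a i)..(a (i+1)), g x ∂νn)) := by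
      rw [Finset.sum_sub_distrib, hsum1, Finset.sum_sub_distrib, hsum2 νp, hsum2 νn, hE_def]
    calc |E| ≤ ∑ i ∈ Finset.range n,
        |(f (C (a (i+1))) - f (C (a i))) -
          ((∫ x in (a i)..(a (i+1)), g x ∂νp) - ∫ x in (a i)..(a (i+1)), g x ∂νn)| := by
          rw [hEsum]; exact Finset.abs_sum_le_sum_abs _ _
      _ ≤ ∑ i ∈ Finset.range n,
          2 * ε * ((νp (Ioc (a i) (a (i+1)))).toReal + (νn (Ioc (a i) (a (i+1)))).toReal) :=
          Finset.sum_le_sum piece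
      _ = ε * (2 * K) := by
          rw [← Finset.mul_sum, Finset.sum_add_distrib, hsum3 νp, hsum3 νn, hK_def]; ring
  -- conclude E = 0
  have hK0 : 0 ≤ K := add_nonneg ENNReal.toReal_nonneg ENNReal.toReal_nonneg
  have hE0 : E = 0 := by
    by_contra hne
    have habs : 0 < |E| := abs_pos.mpr hne
    have h := key (|E| / (2 * (2 * K) + 2)) (by positivity)
    have h2 : |E| / (2*(2*K)+2) * (2*K) < |E| := by
      rw [div_mul_eq_mul_div, div_lt_iff₀ (by positivity)]
      nlinarith
    linarith
  rw [hE_def] at hE0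
  linarith

/-- Lamperti solution of the Stieltjes integral equation `Γ(t) = ∫_0^t A(Γ(s)) dB(s)`:
under the Barrow–Osgood conditions `∫_{-∞}^0 dz/A = ∫_0^∞ dz/A = ∞`, with `𝚯₀` the
global inverse of `𝐇₀(x) = ∫_0^x dz/A(z)` and `dB` represented by the difference of
the locally finite measures `μp`, `μn`, the function `Γ(t) = 𝚯₀(B(t))` solves the
equation for all `t ≥ 0`, and it is the unique continuous finite-variation solution. -/
theorem stmt10 (A : ℝ → ℝ) (hA : Continuous A) (hApos : ∀ x : ℝ, 0 < A x)
    (hBO₁ : Tendsto (fun x => ∫ z in x..(0:ℝ), (A z)⁻¹) atBot atTop)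
    (hBO₂ : Tendsto (fun x => ∫ z in (0:ℝ)..x, (A z)⁻¹) atTop atTop)
    (Θ : ℝ → ℝ)
    (hΘleft : ∀ x : ℝ, Θ (∫ z in (0:ℝ)..x, (A z)⁻¹) = x)
    (hΘright : ∀ y : ℝ, (∫ z in (0:ℝ)..(Θ y), (A z)⁻¹) = y)
    (B : ℝ → ℝ) (hBcont : Continuous B) (hB0 : B 0 = 0)
    (hBV : ∀ T : ℝ, BoundedVariationOn B (Icc 0 T))
    (μp μn : Measure ℝ)
    [IsLocallyFiniteMeasure μp] [IsLocallyFiniteMeasure μn]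
    (hμ : ∀ a b : ℝ, a ≤ b →
      (μp (Ioc a b)).toReal - (μn (Ioc a b)).toReal = B b - B a) :
    (∀ t : ℝ, 0 ≤ t →
      Θ (B t) = (∫ u in Ioc (0:ℝ) t, A (Θ (B u)) ∂μp) -
        ∫ u in Ioc (0:ℝ) t, A (Θ (B u)) ∂μn) ∧
    (∀ Γ : ℝ → ℝ, Continuous Γ → (∀ T : ℝ, BoundedVariationOn Γ (Icc 0 T)) →
      (∀ t : ℝ, 0 ≤ t →
        Γ t = (∫ u in Ioc (0:ℝ) t, A (Γ u) ∂μp) - ∫ u in Ioc (0:ℝ) t, A (Γ u) ∂μn) →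
      ∀ t : ℝ, 0 ≤ t → Γ t = Θ (B t)) := by
  have hAne : ∀ x : ℝ, A x ≠ 0 := fun x => (hApos x).ne'
  have hAinv : Continuous fun z => (A z)⁻¹ := hA.inv₀ hAne
  set H : ℝ → ℝ := fun x => ∫ z in (0:ℝ)..x, (A z)⁻¹ with hH_def
  have hHderiv : ∀ x : ℝ, HasDerivAt H ((A x)⁻¹) x := by
    intro x
    exact intervalIntegral.integral_hasDerivAt_right (hAinv.intervalIntegrable _ _)
      (hAinv.stronglyMeasurableAtFilter _ _) hAinv.continuousAt
  have hHmono : StrictMono H := by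
    intro x y hxy
    have hadd : H x + (∫ z in x..y, (A z)⁻¹) = H y :=
      intervalIntegral.integral_add_adjacent_intervals (hAinv.intervalIntegrable _ _)
        (hAinv.intervalIntegrable _ _)
    have hpos : 0 < ∫ z in x..y, (A z)⁻¹ :=
      intervalIntegral.intervalIntegral_pos_of_pos (hAinv.intervalIntegrable _ _)
        (fun z => inv_pos.mpr (hApos z)) hxy
    linarith
  have hΘmono : Monotone Θ := by
    intro y₁ y₂ h
    by_contra hcon
    push_neg at hcon
    have hlt := hHmono hcon
    have e1 : H (Θ y₁) = y₁ := hΘright y₁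
    have e2 : H (Θ y₂) = y₂ := hΘright y₂
    rw [e1, e2] at hlt
    linarith
  have hΘsurj : Function.Surjective Θ := fun x => ⟨H x, hΘleft x⟩
  have hΘcont : Continuous Θ := hΘmono.continuous_of_surjective hΘsurj
  have hΘderiv : ∀ y : ℝ, HasDerivAt Θ (A (Θ y)) y := by
    intro y
    have h := HasDerivAt.of_local_left_inverse hΘcont.continuousAt
      (hHderiv (Θ y)) (inv_ne_zero (hAne (Θ y)))
      (Eventually.of_forall hΘright)
    rwa [inv_inv] at h
  have hΘ0 : Θ 0 = 0 := by
    have h := hΘleft 0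
    rwa [intervalIntegral.integral_same] at h
  have hH0 : H 0 = 0 := intervalIntegral.integral_same
  constructor
  · intro t ht
    have h := chain_rule Θ (fun y => A (Θ y)) hΘderiv (hA.comp hΘcont) B hBcont μp μn
      (fun a b _ hab => hμ a b hab) t ht
    rw [hB0, hΘ0] at h
    linarith
  · intro Γ hΓc _ hΓeq t ht
    have hΓ0 : Γ 0 = 0 := by
      have := hΓeq 0 le_rfl
      simpa using this
    set d : ℝ → ℝ≥0 := fun u => Real.toNNReal (A (Γ u)) with hd_def
    have hdmeas : Measurable d := (hA.comp hΓc).measurable.real_toNNReal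
    set νp' : Measure ℝ := μp.withDensity (fun x => (d x : ℝ≥0∞)) with hνp'
    set νn' : Measure ℝ := μn.withDensity (fun x => (d x : ℝ≥0∞)) with hνn'
    have hloc : ∀ (μ : Measure ℝ) [IsLocallyFiniteMeasure μ],
        IsLocallyFiniteMeasure (μ.withDensity (fun x => (d x : ℝ≥0∞))) := by
      intro μ _
      constructor
      intro x
      obtain ⟨Cb, hCb⟩ := (isCompact_Icc (a := x - 1) (b := x + 1)).exists_bound_of_continuousOn
        (hA.comp hΓc).continuousOn
      refine ⟨Icc (x-1) (x+1), Icc_mem_nhds (by linarith) (by linarith), ?_⟩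
      rw [withDensity_apply _ measurableSet_Icc]
      calc ∫⁻ u in Icc (x-1) (x+1), (d u : ℝ≥0∞) ∂μ
          ≤ ∫⁻ _ in Icc (x-1) (x+1), ENNReal.ofReal Cb ∂μ := by
            apply setLIntegral_mono measurable_const
            intro u hu
            have := hCb u hu
            rw [Real.norm_eq_abs] at this
            show ENNReal.ofReal (A (Γ u)) ≤ ENNReal.ofReal Cb
            exact ENNReal.ofReal_le_ofReal (le_trans (le_abs_self _) this)
        _ = ENNReal.ofReal Cb * μ (Icc (x-1) (x+1)) := by
            rw [setLIntegral_const]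
        _ < ⊤ := ENNReal.mul_lt_top ENNReal.ofReal_lt_top
            (isCompact_Icc.measure_lt_top)
    haveI instp : IsLocallyFiniteMeasure νp' := hloc μp
    haveI instn : IsLocallyFiniteMeasure νn' := hloc μn
    have hAΓ : Continuous fun u => A (Γ u) := hA.comp hΓc
    have hsetint : ∀ (μ : Measure ℝ) [IsLocallyFiniteMeasure μ], ∀ a b : ℝ,
        ((μ.withDensity (fun x => (d x : ℝ≥0∞))) (Ioc a b)).toReal
          = ∫ u in Ioc a b, A (Γ u) ∂μ := by
      intro μ _ a b
      rw [withDensity_apply _ measurableSet_Ioc]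
      have hinteg : IntegrableOn (fun u => A (Γ u)) (Ioc a b) μ := hAΓ.integrableOn_Ioc
      have hnn : 0 ≤ᵐ[μ.restrict (Ioc a b)] fun u => A (Γ u) :=
        ae_of_all _ fun u => (hApos (Γ u)).le
      have h := ofReal_integral_eq_lintegral_ofReal hinteg hnn
      have hcoe : ∀ u : ℝ, ((d u : ℝ≥0∞)) = ENNReal.ofReal (A (Γ u)) := fun u => rfl
      simp_rw [hcoe]
      rw [← h, ENNReal.toReal_ofReal]
      exact integral_nonneg fun u => (hApos (Γ u)).le
    have hν' : ∀ a b : ℝ, 0 ≤ a → a ≤ b →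
        (νp' (Ioc a b)).toReal - (νn' (Ioc a b)).toReal = Γ b - Γ a := by
      intro a b ha hab
      rw [hνp', hνn', hsetint μp a b, hsetint μn a b]
      have hadd : ∀ (μ : Measure ℝ) [IsLocallyFiniteMeasure μ],
          (∫ u in Ioc (0:ℝ) a, A (Γ u) ∂μ) + ∫ u in Ioc a b, A (Γ u) ∂μ
            = ∫ u in Ioc (0:ℝ) b, A (Γ u) ∂μ := by
        intro μ _
        have h1 := intervalIntegral.integral_add_adjacent_intervals
          (hAΓ.intervalIntegrable (μ := μ) 0 a) (hAΓ.intervalIntegrable (μ := μ) a b)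
        rw [intervalIntegral.integral_of_le ha, intervalIntegral.integral_of_le hab,
          intervalIntegral.integral_of_le (ha.trans hab)] at h1
        exact h1
      have e1 := hΓeq a ha
      have e2 := hΓeq b (ha.trans hab)
      have hp := hadd μp
      have hn := hadd μn
      linarith
    have hchain := chain_rule H (fun x => (A x)⁻¹) hHderiv hAinv Γ hΓc νp' νn' hν' t ht
    have hwd : ∀ (μ : Measure ℝ) [IsLocallyFiniteMeasure μ],
        (∫ u in Ioc (0:ℝ) t, (A (Γ u))⁻¹ ∂(μ.withDensity (fun x => (d x : ℝ≥0∞))))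
          = (μ (Ioc (0:ℝ) t)).toReal := by
      intro μ _
      rw [setIntegral_withDensity_eq_setIntegral_smul hdmeas _ measurableSet_Ioc]
      have hfun : (fun u => d u • (A (Γ u))⁻¹) = fun _ : ℝ => (1:ℝ) := by
        funext u
        have hcoe : ((d u : ℝ)) = A (Γ u) := Real.coe_toNNReal _ (hApos (Γ u)).le
        rw [NNReal.smul_def, hcoe]
        exact mul_inv_cancel₀ (hAne (Γ u))
      rw [hfun, setIntegral_const, smul_eq_mul, mul_one, measureReal_def]
    rw [hνp', hνn', hwd μp, hwd μn] at hchain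
    have hBt := hμ 0 t ht
    rw [hB0, sub_zero] at hBt
    have hHt : H (Γ t) = B t := by
      rw [hΓ0, hH0] at hchain
      linarith
    have hfin : Θ (H (Γ t)) = Γ t := hΘleft (Γ t)
    rw [hHt] at hfin
    exact hfin.symm
end

section
/- Lower semicontinuity of exit times under uniform convergence: let I = (ℓ, r), fix strictly monotone sequences ℓ_n ↓ ℓ and r_n ↑ r with ℓ < ℓ_{n+1} < ℓ_n < r_n < r_{n+1} < r, and for a continuous path x : [0, ∞) → I define S_n(x) = inf{t ≥ 0 : x(t) ∉ (ℓ_n, r_n)} and S(x) = lim_n S_n(x). If continuous paths x_k converge to x uniformly on compact subsets of [0, ∞), then S(x) ≤ liminf_{k → ∞} S(x_k). -/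
open Set Filter Topology

/-- The exit time `S_n(x) = inf { t ≥ 0 : x(t) ∉ (a, b) }`, valued in `[0, ∞]`
(the infimum of the empty set being `∞`). -/
noncomputable def exitTime (a b : ℝ) (x : ℝ → ℝ) : ENNReal :=
  sInf (ENNReal.ofReal '' {t : ℝ | 0 ≤ t ∧ x t ∉ Set.Ioo a b})

/-- Lower semicontinuity of the explosion time `S(x) = lim_n S_n(x) = sup_n S_n(x)`
under locally uniform convergence: if the continuous `I`-valued paths `xₖ` converge
to `x` uniformly on compacts, then `S(x) ≤ liminf_k S(xₖ)`. -/
theorem stmt18 (ℓ r : ℝ) (hlr : ℓ < r) (ln rn : ℕ → ℝ)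
    (hlnanti : StrictAnti ln) (hrnmono : StrictMono rn)
    (hbounds : ∀ n : ℕ, ℓ < ln n ∧ ln n < rn n ∧ rn n < r)
    (hllim : Tendsto ln atTop (𝓝 ℓ)) (hrlim : Tendsto rn atTop (𝓝 r))
    (x : ℝ → ℝ) (xk : ℕ → ℝ → ℝ)
    (hxc : Continuous x) (hxkc : ∀ k : ℕ, Continuous (xk k))
    (hxmem : ∀ t : ℝ, 0 ≤ t → x t ∈ Ioo ℓ r)
    (hxkmem : ∀ k : ℕ, ∀ t : ℝ, 0 ≤ t → xk k t ∈ Ioo ℓ r)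
    (hconv : ∀ T : ℝ, 0 < T → TendstoUniformlyOn xk x atTop (Icc 0 T)) :
    (⨆ n : ℕ, exitTime (ln n) (rn n) x) ≤
      liminf (fun k => ⨆ n : ℕ, exitTime (ln n) (rn n) (xk k)) atTop := by

  refine iSup_le fun n => le_of_forall_lt fun c hc => ?_
  obtain ⟨t, ht0, hct, hts⟩ := ENNReal.lt_iff_exists_real_btwn.mp hc
  refine lt_of_lt_of_le hct ?_
  have hstay : ∀ s ∈ Icc (0:ℝ) t, x s ∈ Ioo (ln n) (rn n) := by
    intro s hs
    by_contra h
    have h1 : exitTime (ln n) (rn n) x ≤ ENNReal.ofReal s :=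
      sInf_le ⟨s, ⟨hs.1, h⟩, rfl⟩
    exact absurd (h1.trans (ENNReal.ofReal_le_ofReal hs.2)) (not_le.mpr hts)
  have hK : IsCompact (Icc (0:ℝ) t) := isCompact_Icc
  have hne : (Icc (0:ℝ) t).Nonempty := ⟨0, le_refl 0, ht0⟩
  obtain ⟨s1, hs1mem, hs1min⟩ := hK.exists_isMinOn hne hxc.continuousOn
  obtain ⟨s2, hs2mem, hs2max⟩ := hK.exists_isMaxOn hne hxc.continuousOn
  set ε := min (x s1 - ln n) (rn n - x s2) with hε
  have hεpos : 0 < ε :=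
    lt_min (sub_pos.mpr (hstay s1 hs1mem).1) (sub_pos.mpr (hstay s2 hs2mem).2)
  have hev : ∀ᶠ k in atTop, ∀ s ∈ Icc (0:ℝ) (t+1), dist (x s) (xk k s) < ε :=
    (Metric.tendstoUniformlyOn_iff.mp (hconv (t+1) (by linarith))) ε hεpos
  refine Filter.le_liminf_of_le (by isBoundedDefault) ?_
  filter_upwards [hev] with k hk
  refine le_trans ?_ (le_iSup (fun m => exitTime (ln m) (rn m) (xk k)) n)
  refine le_sInf ?_
  rintro b ⟨s, ⟨hs0, hsout⟩, rfl⟩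
  rcases le_or_gt s t with hst | hst
  · exfalso
    have hsmem : s ∈ Icc (0:ℝ) t := ⟨hs0, hst⟩
    have hd := hk s ⟨hs0, by linarith⟩
    rw [Real.dist_eq, abs_lt] at hd
    have hlo : x s1 ≤ x s := hs1min hsmem
    have hhi : x s ≤ x s2 := hs2max hsmem
    have hε1 : ε ≤ x s1 - ln n := min_le_left _ _
    have hε2 : ε ≤ rn n - x s2 := min_le_right _ _
    exact hsout ⟨by linarith, by linarith⟩
  · exact ENNReal.ofReal_le_ofReal hst.le
end
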